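/- The number of nilpotent r×r matrices over the finite field with q elements equals q^{r²−r}. -/

import Mathlib

set_option linter.unusedSectionVars false
set_option linter.unnecessarySimpa false
set_option maxHeartbeats 1000000

open LinearMap Module Submodule Function

namespace FineHerstein

/-! ### Generic counting lemmas -/

lemma card_partition {α β : Type*} [Finite α] [Fintype β] (φ : α → β) :
    Nat.card α = ∑ b : β, Nat.card {a // φ a = b} := by
  classical
  have := Fintype.ofFinite α
  calc Nat.card α = Nat.card (Σ b, {a // φ a = b}) :=
        Nat.card_congr (Equiv.sigmaFiberEquiv φ).symm
    _ = ∑ b : β, Nat.card {a // φ a = b} := by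
        rw [Nat.card_eq_fintype_card, Fintype.card_sigma]
        exact Finset.sum_congr rfl fun b _ => (Nat.card_eq_fintype_card).symm

lemma sum_partition {γ β M : Type*} [Fintype γ] [Fintype β] [DecidableEq β] [AddCommMonoid M]
    (ψ : γ → β) (W : γ → M) :
    ∑ c : γ, W c = ∑ b : β, ∑ c : {c : γ // ψ c = b}, W c.val := by
  have h1 : ∑ x : Σ b, {c : γ // ψ c = b}, W ((Equiv.sigmaFiberEquiv ψ) x) = ∑ c : γ, W c :=
    Fintype.sum_equiv (Equiv.sigmaFiberEquiv ψ) _ _ (fun x => rfl)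
  rw [← h1]
  rw [show (Finset.univ : Finset (Σ b, {c : γ // ψ c = b})) =
    Finset.univ.sigma (fun _ => Finset.univ) from rfl, Finset.sum_sigma]
  rfl

/-! ### Definitions -/

variable (F : Type*) [Field F] [Fintype F] [DecidableEq F]

local notation "q" => Fintype.card F

/-- cardinality of `GL m F` -/
noncomputable def glc (m : ℕ) : ℕ := ∏ i : Fin m, (q ^ m - q ^ (i : ℕ))

/-- number of nilpotent `m × m` matrices -/
noncomputable def nilc (m : ℕ) : ℕ := Nat.card {M : Matrix (Fin m) (Fin m) F // M ^ m = 0}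

lemma card_GL (m : ℕ) : Nat.card (GL (Fin m) F) = glc F m :=
  Matrix.card_GL_field m

variable {F}
variable {U : Type*} [AddCommGroup U] [Module F U] [FiniteDimensional F U]

/-! ### Transport lemmas -/

lemma end_pow_finrank {f : Module.End F U} {n : ℕ} (hn : f ^ n = 0) :
    f ^ finrank F U = 0 := by
  have h : IsNilpotent f := ⟨n, hn⟩
  have := h.charpoly_eq_X_pow_finrank
  have h2 := LinearMap.aeval_self_charpoly f
  rw [this] at h2
  simpa using h2

lemma card_nilpotent_end (m n : ℕ) (hU : finrank F U = m) (hmn : m ≤ n) :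
    Nat.card {f : Module.End F U // f ^ n = 0} = nilc F m := by
  have key : ∀ f : Module.End F U, f ^ n = 0 ↔ f ^ m = 0 := by
    intro f
    constructor
    · intro h; rw [← hU]; exact end_pow_finrank h
    · intro h
      rw [← Nat.sub_add_cancel hmn, pow_add, h, mul_zero]
  let b := Module.finBasisOfFinrankEq F U hU
  let e := algEquivMatrix b
  refine Nat.card_congr (Equiv.subtypeEquiv e.toEquiv fun f => ?_)
  rw [key f]
  constructor
  · intro h; show e f ^ m = 0; rw [← map_pow, h, map_zero]
  · intro h
    have : e (f ^ m) = e 0 := by rw [map_pow, map_zero]; exact h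
    exact e.injective this

lemma card_units_end (m : ℕ) (hU : finrank F U = m) :
    Nat.card (Module.End F U)ˣ = glc F m := by
  let b := Module.finBasisOfFinrankEq F U hU
  let e := algEquivMatrix b
  rw [← card_GL F m]
  exact Nat.card_congr (Units.mapEquiv e.toRingEquiv.toMulEquiv).toEquiv

lemma card_li (m : ℕ) (hU : finrank F U = m) :
    Nat.card {s : Fin m → U // LinearIndependent F s} = glc F m := by
  have : Finite U := Module.finite_of_finite F
  rw [card_linearIndependent (by rw [hU]), hU, glc]

lemma card_end (m : ℕ) (hU : finrank F U = m) :
    Nat.card (Module.End F U) = q ^ (m * m) := by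
  have : Finite U := Module.finite_of_finite F
  let b := Module.finBasisOfFinrankEq F U hU
  let e := algEquivMatrix b
  rw [Nat.card_congr e.toEquiv, Nat.card_eq_fintype_card]
  simp [Matrix, pow_mul]
  exact (Fintype.card_congr (Equiv.refl _)).trans (by simp [Fintype.card_fun])

/-! ### Fitting decomposition -/

local notation "n" => finrank F U

lemma ker_pow_inv (f : Module.End F U) (m : ℕ) :
    ∀ x ∈ ker (f ^ m), f x ∈ ker (f ^ m) := by
  intro x hx
  simp only [LinearMap.mem_ker] at *
  have : (f ^ m) (f x) = f ((f ^ m) x) := by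
    rw [← Module.End.mul_apply, ← Module.End.mul_apply, ← pow_succ, ← pow_succ']
  rw [this, hx, map_zero]

lemma range_pow_inv (f : Module.End F U) (m : ℕ) :
    ∀ x ∈ range (f ^ m), f x ∈ range (f ^ m) := by
  rintro x ⟨y, rfl⟩
  refine ⟨f y, ?_⟩
  rw [← Module.End.mul_apply, ← Module.End.mul_apply, ← pow_succ, ← pow_succ']

lemma fitting_isCompl (f : Module.End F U) :
    IsCompl (ker (f ^ n)) (range (f ^ n)) := by
  have hdisj : Disjoint (ker (f ^ n)) (range (f ^ n)) := by
    rw [disjoint_iff, eq_bot_iff]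
    intro x hx
    obtain ⟨hx1, hx2⟩ := Submodule.mem_inf.mp hx
    obtain ⟨y, rfl⟩ := hx2
    have hy : y ∈ ker (f ^ (n + n)) := by
      rw [pow_add]
      simpa [LinearMap.mem_ker, Module.End.mul_apply] using hx1
    rw [Module.End.ker_pow_eq_ker_pow_finrank_of_le le_add_self] at hy
    simpa [Submodule.mem_bot] using hy
  refine ⟨hdisj, codisjoint_iff.mpr ?_⟩
  apply Submodule.eq_top_of_finrank_eq
  have h1 := LinearMap.finrank_range_add_finrank_ker (f ^ n)
  have h2 := Submodule.finrank_sup_add_finrank_inf_eq (ker (f ^ n)) (range (f ^ n))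
  rw [disjoint_iff.mp hdisj, finrank_bot] at h2
  omega

section Fiber

variable {p Q : Submodule F U}

/-- reconstruction of an endomorphism from its parts on complementary submodules -/
noncomputable def recon (h : IsCompl p Q) (g : Module.End F p) (G : Module.End F Q) :
    Module.End F U :=
  (prodEquivOfIsCompl p Q h).conj (g.prodMap G)

lemma recon_apply_left (h : IsCompl p Q) (g : Module.End F p) (G : Module.End F Q) (x : p) :
    recon h g G x = (g x : U) := by
  rw [recon, LinearEquiv.conj_apply_apply, prodEquivOfIsCompl_symm_apply_left]
  show (prodEquivOfIsCompl p Q h) (g x, G 0) = _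
  rw [map_zero, coe_prodEquivOfIsCompl']
  simp

lemma recon_apply_right (h : IsCompl p Q) (g : Module.End F p) (G : Module.End F Q) (x : Q) :
    recon h g G x = (G x : U) := by
  rw [recon, LinearEquiv.conj_apply_apply, prodEquivOfIsCompl_symm_apply_right]
  show (prodEquivOfIsCompl p Q h) (g 0, G x) = _
  rw [map_zero, coe_prodEquivOfIsCompl']
  simp

lemma recon_pow (h : IsCompl p Q) (g : Module.End F p) (G : Module.End F Q) (m : ℕ) :
    (recon h g G) ^ m = recon h (g ^ m) (G ^ m) := by
  induction m with
  | zero =>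
    simp only [pow_zero, recon, LinearMap.prodMap_one]
    show _ = (prodEquivOfIsCompl p Q h).conj LinearMap.id
    rw [LinearEquiv.conj_id]; rfl
  | succ m ih =>
    rw [pow_succ, ih, pow_succ, pow_succ, recon, recon, recon, ← LinearMap.prodMap_mul]
    show _ = (prodEquivOfIsCompl p Q h).conj (((g ^ m).prodMap (G ^ m)).comp (g.prodMap G))
    rw [LinearEquiv.conj_comp]
    rfl

lemma mem_p_iff (h : IsCompl p Q) (x : U) :
    x ∈ p ↔ ((prodEquivOfIsCompl p Q h).symm x).2 = 0 := by
  obtain ⟨⟨a, b⟩, rfl⟩ := (prodEquivOfIsCompl p Q h).surjective x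
  rw [LinearEquiv.symm_apply_apply, coe_prodEquivOfIsCompl']
  constructor
  · intro hx
    have hb : (b : U) ∈ p ⊓ Q := by
      constructor
      · have : (b : U) = (↑a + ↑b) - ↑a := by abel
        rw [this]; exact sub_mem hx a.2
      · exact b.2
    rw [disjoint_iff.mp h.disjoint] at hb
    exact Subtype.ext (by simpa using hb)
  · intro hb
    rw [hb]
    simpa using a.2

lemma recon_zero_unit_ker (h : IsCompl p Q) (G : Module.End F Q) (hG : IsUnit G) :
    ker (recon h 0 G) = p := by
  ext x
  rw [LinearMap.mem_ker, recon, LinearEquiv.conj_apply_apply]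
  rw [mem_p_iff h x]
  set e := prodEquivOfIsCompl p Q h
  constructor
  · intro hx
    have : (0 : Module.End F p).prodMap G (e.symm x) = 0 := by
      apply e.injective; simpa using hx
    have h2 : G ((e.symm x).2) = 0 := congrArg Prod.snd this
    exact ((Module.End.isUnit_iff G).mp hG).injective (by simpa using h2)
  · intro hx
    have : (0 : Module.End F p).prodMap G (e.symm x) = 0 := by
      ext <;> simp [hx]
    rw [this, map_zero]

lemma recon_zero_unit_range (h : IsCompl p Q) (G : Module.End F Q) (hG : IsUnit G) :
    range (recon h 0 G) = Q := by
  ext x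
  set e := prodEquivOfIsCompl p Q h
  constructor
  · rintro ⟨y, rfl⟩
    show e ((0 : Module.End F p).prodMap G (e.symm y)) ∈ Q
    have : (0 : Module.End F p).prodMap G (e.symm y) = (0, G (e.symm y).2) := by
      ext <;> simp
    rw [this]
    show e ((0 : p), G (e.symm y).2) ∈ Q
    rw [coe_prodEquivOfIsCompl']
    simpa using (G ((e.symm y).2)).2
  · intro hx
    obtain ⟨z, hz⟩ := ((Module.End.isUnit_iff G).mp hG).surjective ⟨x, hx⟩
    refine ⟨e (0, z), ?_⟩
    show e ((0 : Module.End F p).prodMap G (e.symm (e (0, z)))) = x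
    rw [LinearEquiv.symm_apply_apply]
    have : (0 : Module.End F p).prodMap G (0, z) = (0, G z) := by ext <;> simp
    rw [this, hz, coe_prodEquivOfIsCompl']
    simp

lemma restrict_mem_p {f : Module.End F U} (hker : ker (f ^ n) = p) :
    ∀ x ∈ p, f x ∈ p := by
  intro x hx
  rw [← hker] at hx ⊢
  exact ker_pow_inv f _ x hx

lemma restrict_mem_Q {f : Module.End F U} (hran : range (f ^ n) = Q) :
    ∀ x ∈ Q, f x ∈ Q := by
  intro x hx
  rw [← hran] at hx ⊢
  exact range_pow_inv f _ x hx

lemma restrict_p_pow {f : Module.End F U} (hker : ker (f ^ n) = p) :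
    (f.restrict (restrict_mem_p hker)) ^ n = 0 := by
  rw [Module.End.pow_restrict]
  ext x
  obtain ⟨x, hx⟩ := x
  simp only [LinearMap.restrict_coe_apply, LinearMap.zero_apply, ZeroMemClass.coe_zero]
  rw [← hker, LinearMap.mem_ker] at hx
  exact hx

lemma restrict_Q_isUnit (h : IsCompl p Q) {f : Module.End F U} (hn : 0 < n)
    (hker : ker (f ^ n) = p) (hran : range (f ^ n) = Q) :
    IsUnit (f.restrict (restrict_mem_Q hran)) := by
  rw [Module.End.isUnit_iff]
  have hinj : Injective (f.restrict (restrict_mem_Q hran)) := by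
    rw [← LinearMap.ker_eq_bot, eq_bot_iff]
    intro x hx
    rw [LinearMap.mem_ker] at hx
    have hx' : f (x : U) = 0 := by
      have := congrArg (Subtype.val) hx
      rwa [LinearMap.restrict_coe_apply] at this
    obtain ⟨m, hm⟩ := Nat.exists_eq_succ_of_ne_zero hn.ne'
    have hxk : (x : U) ∈ ker (f ^ n) := by
      rw [LinearMap.mem_ker, hm, pow_succ, Module.End.mul_apply, hx', map_zero]
    rw [hker] at hxk
    have hmem : (x : U) ∈ p ⊓ Q := ⟨hxk, x.2⟩
    rw [disjoint_iff.mp h.disjoint] at hmem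
    exact Subtype.ext (by simpa using hmem)
  exact ⟨hinj, (LinearMap.injective_iff_surjective).mp hinj⟩

/-- The Fitting fiber equivalence. -/
noncomputable def fittingEquiv (hn : 0 < n) (h : IsCompl p Q) :
    {f : Module.End F U // ker (f ^ n) = p ∧ range (f ^ n) = Q} ≃
      ({g : Module.End F p // g ^ n = 0} × (Module.End F Q)ˣ) where
  toFun fh := (⟨fh.1.restrict (restrict_mem_p fh.2.1), restrict_p_pow fh.2.1⟩,
    (restrict_Q_isUnit h hn fh.2.1 fh.2.2).unit)
  invFun gu := ⟨recon h gu.1.1 gu.2.val, by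
      rw [recon_pow, gu.1.2]
      exact recon_zero_unit_ker h _ ((gu.2.isUnit).pow n), by
      rw [recon_pow, gu.1.2]
      exact recon_zero_unit_range h _ ((gu.2.isUnit).pow n)⟩
  left_inv := by
    rintro ⟨f, hker, hran⟩
    apply Subtype.ext
    show recon h _ ((restrict_Q_isUnit h hn hker hran).unit : Module.End F Q) = f
    rw [IsUnit.unit_spec]
    apply LinearMap.ext
    intro x
    obtain ⟨⟨a, b⟩, rfl⟩ := (prodEquivOfIsCompl p Q h).surjective x
    rw [coe_prodEquivOfIsCompl']
    rw [map_add, recon_apply_left, recon_apply_right, map_add,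
      LinearMap.restrict_coe_apply, LinearMap.restrict_coe_apply]
  right_inv := by
    rintro ⟨⟨g, hg⟩, u⟩
    refine Prod.ext ?_ ?_
    · apply Subtype.ext
      apply LinearMap.ext
      intro x
      rw [Subtype.ext_iff, LinearMap.restrict_coe_apply, recon_apply_left]
    · apply Units.ext
      rw [IsUnit.unit_spec]
      apply LinearMap.ext
      intro x
      rw [Subtype.ext_iff, LinearMap.restrict_coe_apply, recon_apply_right]

end Fiber

/-! ### Complementary pairs -/

/-- pairs of complementary submodules -/
abbrev CP (F : Type*) (U : Type*) [Field F] [AddCommGroup U] [Module F U] :=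
  {c : Submodule F U × Submodule F U // IsCompl c.1 c.2}

lemma finite_submodule : Finite (Submodule F U) := by
  have : Finite U := Module.finite_of_finite F
  exact Finite.of_injective (fun s => (s : Set U)) SetLike.coe_injective

section LIFiber

variable {p Q : Submodule F U} {j l : ℕ}

/-- The fiber equivalence for linearly independent families splitting along a
complementary pair. -/
noncomputable def liFiberEquiv (h : IsCompl p Q) (hp : finrank F p = j) (hQ : finrank F Q = l) :
    {s : Fin j ⊕ Fin l → U // LinearIndependent F s ∧
        span F (Set.range (s ∘ Sum.inl)) = p ∧ span F (Set.range (s ∘ Sum.inr)) = Q} ≃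
    ({t : Fin j → p // LinearIndependent F t} × {u : Fin l → Q // LinearIndependent F u}) where
  toFun s :=
    (⟨fun i => ⟨s.1 (Sum.inl i), by
        have h0 : s.1 (Sum.inl i) ∈ span F (Set.range (s.1 ∘ Sum.inl)) :=
          subset_span ⟨i, rfl⟩
        rwa [s.2.2.1] at h0⟩,
      LinearIndependent.of_comp p.subtype (linearIndependent_sum.mp s.2.1).1⟩,
     ⟨fun i => ⟨s.1 (Sum.inr i), by
        have h0 : s.1 (Sum.inr i) ∈ span F (Set.range (s.1 ∘ Sum.inr)) :=
          subset_span ⟨i, rfl⟩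
        rwa [s.2.2.2] at h0⟩,
      LinearIndependent.of_comp Q.subtype (linearIndependent_sum.mp s.2.1).2.1⟩)
  invFun tu := ⟨Sum.elim (fun i => (tu.1.1 i : U)) (fun i => (tu.2.1 i : U)), by
      have ht : LinearIndependent F (fun i => (tu.1.1 i : U)) :=
        tu.1.2.map' p.subtype (ker_subtype p)
      have hu : LinearIndependent F (fun i => (tu.2.1 i : U)) :=
        tu.2.2.map' Q.subtype (ker_subtype Q)
      have hsp : span F (Set.range (fun i => (tu.1.1 i : U))) ≤ p := by
        rw [span_le]; rintro _ ⟨i, rfl⟩; exact (tu.1.1 i).2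
      have hsQ : span F (Set.range (fun i => (tu.2.1 i : U))) ≤ Q := by
        rw [span_le]; rintro _ ⟨i, rfl⟩; exact (tu.2.1 i).2
      exact linearIndependent_sum.mpr ⟨ht, hu, h.disjoint.mono hsp hsQ⟩, by
      show span F (Set.range (fun i => ((p.subtype) (tu.1.1 i)))) = p
      rw [show (fun i => ((p.subtype) (tu.1.1 i))) = p.subtype ∘ tu.1.1 from rfl,
        Set.range_comp, Submodule.span_image,
        tu.1.2.span_eq_top_of_card_eq_finrank' (by simp [hp]), Submodule.map_top,
        Submodule.range_subtype], by
      show span F (Set.range (fun i => ((Q.subtype) (tu.2.1 i)))) = Q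
      rw [show (fun i => ((Q.subtype) (tu.2.1 i))) = Q.subtype ∘ tu.2.1 from rfl,
        Set.range_comp, Submodule.span_image,
        tu.2.2.span_eq_top_of_card_eq_finrank' (by simp [hQ]), Submodule.map_top,
        Submodule.range_subtype]⟩
  left_inv s := Subtype.ext (funext fun x => by cases x <;> rfl)
  right_inv tu := Prod.ext (Subtype.ext (funext fun i => Subtype.ext rfl))
    (Subtype.ext (funext fun i => Subtype.ext rfl))

end LIFiber

/-- counting complementary pairs with prescribed dimension -/
theorem card_CPj_mul (k' j : ℕ) (hkU : finrank F U = k') (hj : j ≤ k') :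
    Nat.card {c : CP F U // finrank F c.val.1 = j} * (glc F j * glc F (k' - j)) =
      glc F k' := by
  subst hkU
  classical
  have hfinU : Finite U := Module.finite_of_finite F
  have hfinS : Finite (Submodule F U) := finite_submodule
  set k := finrank F U with hk
  set l := k - j with hl
  have hjl : j + l = k := by omega
  -- the map from LI families to complementary pairs
  have hφ : ∀ s : {s : Fin j ⊕ Fin l → U // LinearIndependent F s},
      IsCompl (span F (Set.range (s.1 ∘ Sum.inl))) (span F (Set.range (s.1 ∘ Sum.inr)))
      ∧ finrank F (span F (Set.range (s.1 ∘ Sum.inl))) = j := by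
    rintro ⟨s, hs⟩
    obtain ⟨h1, h2, h3⟩ := linearIndependent_sum.mp hs
    have hcod : span F (Set.range (s ∘ Sum.inl)) ⊔ span F (Set.range (s ∘ Sum.inr)) = ⊤ := by
      have hr : Set.range (s ∘ Sum.inl) ∪ Set.range (s ∘ Sum.inr) = Set.range s := by
        rw [← Set.Sum.elim_range, Sum.elim_comp_inl_inr]
      rw [← Submodule.span_union, hr]
      apply hs.span_eq_top_of_card_eq_finrank'
      simp [hjl]
      exact hk
    refine ⟨⟨h3, codisjoint_iff.mpr hcod⟩, ?_⟩
    · rw [finrank_span_eq_card h1]; simp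
  let φ : {s : Fin j ⊕ Fin l → U // LinearIndependent F s} →
      {c : CP F U // finrank F c.val.1 = j} := fun s =>
    ⟨⟨(span F (Set.range (s.1 ∘ Sum.inl)), span F (Set.range (s.1 ∘ Sum.inr))), (hφ s).1⟩,
      (hφ s).2⟩
  have hLI : Nat.card {s : Fin j ⊕ Fin l → U // LinearIndependent F s} = glc F k := by
    have e0 : (Fin j ⊕ Fin l) ≃ Fin k := finSumFinEquiv.trans (finCongr hjl)
    have e1 : {s : Fin j ⊕ Fin l → U // LinearIndependent F s} ≃
        {t : Fin k → U // LinearIndependent F t} :=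
      Equiv.subtypeEquiv (Equiv.arrowCongr e0 (Equiv.refl U)) (fun s => by
        rw [show ((Equiv.arrowCongr e0 (Equiv.refl U)) s) = s ∘ e0.symm from rfl]
        exact (linearIndependent_equiv e0.symm).symm)
    rw [Nat.card_congr e1, card_li k rfl]
  have instCP : Fintype {c : CP F U // finrank F c.val.1 = j} := Fintype.ofFinite _
  have hfib : ∀ c : {c : CP F U // finrank F c.val.1 = j},
      Nat.card {s // φ s = c} = glc F j * glc F l := by
    rintro ⟨⟨⟨P1, Q1⟩, hc⟩, hdim⟩
    have hd2 : finrank F Q1 = l := by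
      have := Submodule.finrank_add_eq_of_isCompl hc
      dsimp only at this hdim
      omega
    have e2 : {s // φ s = ⟨⟨(P1, Q1), hc⟩, hdim⟩} ≃
        {s : Fin j ⊕ Fin l → U // LinearIndependent F s ∧
          span F (Set.range (s ∘ Sum.inl)) = P1 ∧ span F (Set.range (s ∘ Sum.inr)) = Q1} :=
      { toFun := fun x => ⟨x.1.1, x.1.2,
          congrArg (fun z => z.val.val.1) x.2, congrArg (fun z => z.val.val.2) x.2⟩
        invFun := fun s => ⟨⟨s.1, s.2.1⟩,
          Subtype.ext (Subtype.ext (Prod.ext s.2.2.1 s.2.2.2))⟩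
        left_inv := fun x => Subtype.ext (Subtype.ext rfl)
        right_inv := fun s => Subtype.ext rfl }
    rw [Nat.card_congr e2, Nat.card_congr (liFiberEquiv hc hdim hd2), Nat.card_prod,
      card_li j hdim, card_li l hd2]
  have hpart := card_partition φ
  rw [hLI] at hpart
  rw [hpart]
  rw [Finset.sum_congr rfl (fun c _ => hfib c), Finset.sum_const, smul_eq_mul,
    Nat.card_eq_fintype_card]
  rfl

/-- master counting identity: partition endomorphisms by their Fitting decomposition -/
theorem master_count (k' : ℕ) (hkU : finrank F U = k') (hn : 0 < k') :
    q ^ (k' * k') =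
      ∑ jf : Fin (k' + 1),
        Nat.card {c : CP F U // finrank F c.val.1 = (jf : ℕ)} *
          (nilc F (jf : ℕ) * glc F (k' - (jf : ℕ))) := by
  subst hkU
  classical
  have hfinU : Finite U := Module.finite_of_finite F
  have hfinS : Finite (Submodule F U) := finite_submodule
  have instCP : Fintype (CP F U) := Fintype.ofFinite _
  have hfinE : Finite (Module.End F U) := by
    exact Finite.of_injective (fun f => (f : U → U)) (DFunLike.coe_injective)
  let φE : Module.End F U → CP F U := fun f =>
    ⟨(ker (f ^ n), range (f ^ n)), fitting_isCompl f⟩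
  -- per-fiber count
  have hfib : ∀ c : CP F U, Nat.card {f // φE f = c} =
      nilc F (finrank F c.val.1) * glc F (finrank F c.val.2) := by
    rintro ⟨⟨P1, Q1⟩, hc⟩
    have e3 : {f // φE f = ⟨(P1, Q1), hc⟩} ≃
        {f : Module.End F U // ker (f ^ n) = P1 ∧ range (f ^ n) = Q1} :=
      { toFun := fun x => ⟨x.1,
          congrArg (fun z => z.val.1) x.2, congrArg (fun z => z.val.2) x.2⟩
        invFun := fun f => ⟨f.1, Subtype.ext (Prod.ext f.2.1 f.2.2)⟩
        left_inv := fun x => Subtype.ext rfl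
        right_inv := fun f => Subtype.ext rfl }
    rw [Nat.card_congr e3, Nat.card_congr (fittingEquiv hn hc), Nat.card_prod]
    dsimp only
    rw [card_nilpotent_end (finrank F P1) n rfl (Submodule.finrank_le P1),
      card_units_end (finrank F Q1) rfl]
  have hpart := card_partition φE
  rw [card_end (finrank F U) rfl] at hpart
  rw [Finset.sum_congr rfl (fun c _ => hfib c)] at hpart
  -- regroup by the dimension of the first component
  let ψ : CP F U → Fin (finrank F U + 1) := fun c =>
    ⟨finrank F c.val.1, Nat.lt_succ_of_le (Submodule.finrank_le _)⟩
  have hgroup := sum_partition ψ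
    (fun c => nilc F (finrank F c.val.1) * glc F (finrank F c.val.2))
  rw [hgroup] at hpart
  rw [hpart]
  apply Finset.sum_congr rfl
  intro jf _
  have hconst : ∀ c : {c : CP F U // ψ c = jf},
      nilc F (finrank F c.val.val.1) * glc F (finrank F c.val.val.2) =
        nilc F (jf : ℕ) * glc F (finrank F U - (jf : ℕ)) := by
    rintro ⟨⟨⟨P1, Q1⟩, hc⟩, hdim⟩
    have h1 : finrank F P1 = (jf : ℕ) := by
      have := congrArg Fin.val hdim
      simpa using this
    have h2 := Submodule.finrank_add_eq_of_isCompl hc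
    dsimp only at h1 h2 ⊢
    rw [h1] at h2 ⊢
    rw [show finrank F Q1 = finrank F U - (jf : ℕ) by omega]
  rw [Finset.sum_congr rfl (fun c _ => hconst c), Finset.sum_const, smul_eq_mul,
    Nat.card_eq_fintype_card]
  congr 1
  · apply Fintype.card_congr
    exact Equiv.subtypeEquiv (Equiv.refl _) (fun c => by
      rw [Fin.ext_iff]
      rfl)

/-! ### Arithmetic -/

variable (F)

noncomputable def gQ (m : ℕ) : ℚ := ∏ i : Fin m, ((q : ℚ) ^ m - (q : ℚ) ^ (i : ℕ))

lemma one_lt_qQ : (1 : ℚ) < q := by exact_mod_cast Fintype.one_lt_card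

lemma gQ_pos (m : ℕ) : 0 < gQ F m := by
  apply Finset.prod_pos
  intro i _
  have hq : (1 : ℚ) < q := one_lt_qQ F
  have : (q : ℚ) ^ (i : ℕ) < (q : ℚ) ^ m := pow_lt_pow_right₀ hq i.2
  linarith

lemma glc_cast (m : ℕ) : ((glc F m : ℚ)) = gQ F m := by
  rw [glc, gQ, Nat.cast_prod]
  apply Finset.prod_congr rfl
  intro i _
  have h1 : (Fintype.card F) ^ (i : ℕ) ≤ (Fintype.card F) ^ m :=
    Nat.pow_le_pow_right Fintype.card_pos (le_of_lt i.2)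
  push_cast [Nat.cast_sub h1]
  ring

lemma gQ_zero : gQ F 0 = 1 := by simp [gQ]

lemma gQ_succ (m : ℕ) : gQ F (m + 1) = ((q : ℚ) ^ (m + 1) - 1) * (q : ℚ) ^ m * gQ F m := by
  rw [gQ, Fin.prod_univ_succ]
  have hfac : ∀ i : Fin m,
      (q : ℚ) ^ (m + 1) - (q : ℚ) ^ ((i.succ : Fin (m + 1)) : ℕ) =
        (q : ℚ) * ((q : ℚ) ^ m - (q : ℚ) ^ (i : ℕ)) := by
    intro i
    rw [Fin.val_succ]
    ring
  rw [Finset.prod_congr rfl (fun i _ => hfac i), Finset.prod_mul_distrib, Finset.prod_const]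
  simp only [Finset.card_univ, Fintype.card_fin, Fin.val_zero, pow_zero, gQ]
  ring

lemma nilc_zero : nilc F 0 = 1 := by
  have h0 : ∀ M : Matrix (Fin 0) (Fin 0) F, M ^ 0 = 0 := fun M => Subsingleton.elim _ _
  rw [nilc, Nat.card_congr (Equiv.subtypeUnivEquiv h0)]
  exact Nat.card_unique

/-- partial sums of the Fine–Herstein series -/
noncomputable def Sq (k : ℕ) : ℚ := ∑ j ∈ Finset.range (k + 1), (nilc F j : ℚ) / gQ F j

lemma key_identity (k : ℕ) : (q : ℚ) ^ (k * k) = gQ F k * Sq F k := by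
  cases k with
  | zero => simp [Sq, gQ_zero, nilc_zero]
  | succ m =>
    set k := m + 1 with hk
    have hU : finrank F (Fin k → F) = k := by
      rw [Module.finrank_fintype_fun_eq_card, Fintype.card_fin]
    have hm := master_count (U := Fin k → F) k hU (Nat.succ_pos m)
    have hmQ := congrArg (Nat.cast : ℕ → ℚ) hm
    push_cast [glc_cast] at hmQ
    rw [hmQ]
    have hterm : ∀ jf : Fin (k + 1),
        (Nat.card {c : CP F (Fin k → F) // finrank F c.val.1 = (jf : ℕ)} : ℚ) *
            ((nilc F (jf : ℕ) : ℚ) * gQ F (k - (jf : ℕ))) =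
          gQ F k * ((nilc F (jf : ℕ) : ℚ) / gQ F (jf : ℕ)) := by
      intro jf
      have hj : (jf : ℕ) ≤ k := Nat.lt_succ_iff.mp jf.2
      have hC := congrArg (Nat.cast : ℕ → ℚ)
        (card_CPj_mul (U := Fin k → F) k (jf : ℕ) hU hj)
      push_cast [glc_cast] at hC
      have h1 : gQ F (jf : ℕ) ≠ 0 := (gQ_pos F _).ne'
      field_simp
      linear_combination (nilc F (jf : ℕ) : ℚ) * hC
    rw [Finset.sum_congr rfl (fun jf _ => hterm jf), ← Finset.mul_sum]
    congr 1
    rw [Sq]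
    exact Fin.sum_univ_eq_sum_range (fun j => (nilc F j : ℚ) / gQ F j) (k + 1)

lemma nilc_eq (k : ℕ) : nilc F k = q ^ (k ^ 2 - k) := by
  cases k with
  | zero => simpa using nilc_zero F
  | succ m =>
    have h1 := key_identity F (m + 1)
    have h0 := key_identity F m
    have hS : Sq F (m + 1) = Sq F m + (nilc F (m + 1) : ℚ) / gQ F (m + 1) := by
      rw [Sq, Finset.sum_range_succ]
      rfl
    have hg1 : gQ F (m + 1) ≠ 0 := (gQ_pos _ _).ne'
    have hg0 : gQ F m ≠ 0 := (gQ_pos _ _).ne'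
    have hrec := gQ_succ F m
    have hcast : ((nilc F (m + 1) : ℚ)) = (q : ℚ) ^ ((m + 1) ^ 2 - (m + 1)) := by
      have h2 : (m + 1) ^ 2 = m * m + 2 * m + 1 := by ring
      have hexp : (m + 1) ^ 2 - (m + 1) = m * m + m := by omega
      rw [hexp]
      rw [hS, mul_add (gQ F (m + 1)), mul_div_cancel₀ _ hg1, hrec] at h1
      linear_combination (-1 : ℚ) * h1 + (((q : ℚ) ^ (m + 1) - 1) * (q : ℚ) ^ m) * h0
    have hfin : ((nilc F (m + 1) : ℚ)) = ((q ^ ((m + 1) ^ 2 - (m + 1)) : ℕ) : ℚ) := by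
      push_cast
      exact hcast
    exact_mod_cast hfin

end FineHerstein

/-- (Fine–Herstein) The number of nilpotent `r × r` matrices over the finite field with `q`
elements equals `q^(r² - r)`.  (A matrix `N` is nilpotent iff `N^r = 0`.) -/
theorem stmt_1 (F : Type*) [Field F] [Fintype F] [DecidableEq F] (q r : ℕ)
    (hq : Fintype.card F = q) :
    Nat.card {M : Matrix (Fin r) (Fin r) F // M ^ r = 0} = q ^ (r ^ 2 - r) := by
  subst hq
  exact FineHerstein.nilc_eq F r
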